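/- Let N, M be positive integers, let H be an N×M complex matrix, ĥ ∈ ℂ^N, and β > 0. Define Γ(μ) = β² diag(ĥ)ᴴ H Hᴴ (μ I + β² H Hᴴ)⁻² H Hᴴ diag(ĥ). Then for all real μ₁, μ₂ with 0 < μ₁ ≤ μ₂, the matrix Γ(μ₁) − Γ(μ₂) is positive semidefinite; in particular, for every θ ∈ ℂ^N, the quadratic form q_{Γ(μ)}(θ) = θᵀ Γ(μ) θ̄ is monotone nonincreasing in μ. -/

import Mathlib

open Matrix
open scoped ComplexOrder

/-- `Γ(μ) = β² diag(ĥ)ᴴ H Hᴴ (μ I + β² H Hᴴ)⁻² H Hᴴ diag(ĥ)`. -/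
noncomputable def Gam {N M : ℕ} (H : Matrix (Fin N) (Fin M) ℂ) (β μ : ℝ)
    (hhat : Fin N → ℂ) : Matrix (Fin N) (Fin N) ℂ :=
  ((β : ℂ) ^ 2) •
    ((Matrix.diagonal hhat)ᴴ * (H * Hᴴ)
      * (((μ : ℂ) • 1 + ((β : ℂ) ^ 2) • (H * Hᴴ))⁻¹
          * ((μ : ℂ) • 1 + ((β : ℂ) ^ 2) • (H * Hᴴ))⁻¹)
      * (H * Hᴴ) * Matrix.diagonal hhat)

lemma smul_posSemidef_of_nonneg {n : ℕ} {c : ℝ} (hc : 0 ≤ c)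
    {M : Matrix (Fin n) (Fin n) ℂ} (hM : M.PosSemidef) :
    ((c : ℂ) • M).PosSemidef := by
  refine posSemidef_iff_dotProduct_mulVec.mpr ⟨?_, fun x => ?_⟩
  · show ((c : ℂ) • M)ᴴ = _
    rw [conjTranspose_smul, Complex.star_def, Complex.conj_ofReal, hM.1.eq]
  · rw [Matrix.smul_mulVec, dotProduct_smul, smul_eq_mul]
    exact mul_nonneg (by exact_mod_cast hc) (hM.dotProduct_mulVec_nonneg x)

lemma invOf_sq_sub_invOf_sq {R : Type*} [Ring R] (S₁ S₂ : R)
    [Invertible S₁] [Invertible S₂] (hc : Commute S₁ S₂) :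
    ⅟S₁ * ⅟S₁ - ⅟S₂ * ⅟S₂ = ⅟S₁ * ⅟S₂ * (S₂ * S₂ - S₁ * S₁) * (⅟S₂ * ⅟S₁) := by
  have e1 : ⅟S₂ * S₁ = S₁ * ⅟S₂ := (hc.symm.invOf_left).eq
  have e1' : ∀ X : R, ⅟S₂ * (S₁ * X) = S₁ * (⅟S₂ * X) := fun X => by
    rw [← mul_assoc, e1, mul_assoc]
  have e2 : S₁ * (⅟S₂ * ⅟S₁) = ⅟S₂ := by
    rw [← mul_assoc, ← e1, mul_assoc, mul_invOf_self, mul_one]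
  have h2 : ⅟S₁ * ⅟S₂ * (S₂ * S₂) * (⅟S₂ * ⅟S₁) = ⅟S₁ * ⅟S₁ := by
    simp only [mul_assoc, invOf_mul_cancel_left, mul_invOf_cancel_left]
  have h1 : ⅟S₁ * ⅟S₂ * (S₁ * S₁) * (⅟S₂ * ⅟S₁) = ⅟S₂ * ⅟S₂ := by
    simp only [mul_assoc]
    rw [e2, e1', invOf_mul_cancel_left]
  rw [mul_sub, sub_mul, h2, h1]

/-- `Γ(μ₁) − Γ(μ₂) ⪰ 0` for `0 < μ₁ ≤ μ₂`; in particular the quadratic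
form `θᵀ Γ(μ) θ̄` is monotone nonincreasing in `μ`. -/
theorem gam_antitone (N M : ℕ) (hN : 0 < N) (hM : 0 < M)
    (H : Matrix (Fin N) (Fin M) ℂ) (hhat : Fin N → ℂ) (β : ℝ) (hβ : 0 < β) :
    ∀ μ₁ μ₂ : ℝ, 0 < μ₁ → μ₁ ≤ μ₂ →
      (Gam H β μ₁ hhat - Gam H β μ₂ hhat).PosSemidef ∧
      ∀ θ : Fin N → ℂ,
        (θ ⬝ᵥ (Gam H β μ₂ hhat *ᵥ star θ)).re
          ≤ (θ ⬝ᵥ (Gam H β μ₁ hhat *ᵥ star θ)).re := by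
  intro μ₁ μ₂ hμ₁ hμ₁₂
  set A : Matrix (Fin N) (Fin N) ℂ := H * Hᴴ with hAdef
  set D : Matrix (Fin N) (Fin N) ℂ := Matrix.diagonal hhat with hDdef
  have hA : A.PosSemidef := posSemidef_self_mul_conjTranspose H
  have hbA : (((β : ℂ) ^ 2) • A).PosSemidef := by
    have h : ((β : ℂ) • H) * ((β : ℂ) • H)ᴴ = ((β : ℂ) ^ 2) • A := by
      rw [conjTranspose_smul, Matrix.smul_mul, Matrix.mul_smul, smul_smul,
        Complex.star_def, Complex.conj_ofReal, ← sq, hAdef]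
    rw [← h]
    exact posSemidef_self_mul_conjTranspose _
  set S : ℝ → Matrix (Fin N) (Fin N) ℂ :=
    fun μ => (μ : ℂ) • 1 + ((β : ℂ) ^ 2) • A with hSdef
  have hSpos : ∀ μ : ℝ, 0 < μ → (S μ).PosDef := by
    intro μ hμ
    have h1 : ((μ : ℂ) • (1 : Matrix (Fin N) (Fin N) ℂ)).PosDef := by
      rw [← Matrix.diagonal_one, ← Matrix.diagonal_smul]
      refine Matrix.posDef_diagonal_iff.mpr fun i => ?_
      simpa using (Complex.zero_lt_real.mpr hμ)
    exact h1.add_posSemidef hbA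
  have hS₁ := hSpos μ₁ hμ₁
  have hS₂ := hSpos μ₂ (lt_of_lt_of_le hμ₁ hμ₁₂)
  haveI i₁ : Invertible (S μ₁) :=
    Matrix.invertibleOfIsUnitDet _ ((Matrix.isUnit_iff_isUnit_det _).mp hS₁.isUnit)
  haveI i₂ : Invertible (S μ₂) :=
    Matrix.invertibleOfIsUnitDet _ ((Matrix.isUnit_iff_isUnit_det _).mp hS₂.isUnit)
  have hcom : Commute (S μ₁) (S μ₂) := by
    show _ * _ = _ * _
    simp only [hSdef, Matrix.add_mul, Matrix.mul_add, Matrix.smul_mul, Matrix.mul_smul,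
      smul_smul, Matrix.one_mul, Matrix.mul_one]
    module
  have hkey0 : S μ₂ * S μ₂ - S μ₁ * S μ₁ = ((μ₂ - μ₁ : ℝ) : ℂ) • (S μ₁ + S μ₂) := by
    simp only [hSdef, Matrix.add_mul, Matrix.mul_add, Matrix.smul_mul, Matrix.mul_smul,
      smul_smul, Matrix.one_mul, Matrix.mul_one, smul_add]
    push_cast
    module
  have hsub : (S μ₁)⁻¹ * (S μ₁)⁻¹ - (S μ₂)⁻¹ * (S μ₂)⁻¹
      = ((μ₂ - μ₁ : ℝ) : ℂ) •
        ((S μ₁)⁻¹ * (S μ₂)⁻¹ * (S μ₁ + S μ₂) * ((S μ₂)⁻¹ * (S μ₁)⁻¹)) := by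
    rw [← Matrix.invOf_eq_nonsing_inv (S μ₁), ← Matrix.invOf_eq_nonsing_inv (S μ₂),
      invOf_sq_sub_invOf_sq _ _ hcom, hkey0]
    simp only [Matrix.mul_smul, Matrix.smul_mul]
  set B : Matrix (Fin N) (Fin N) ℂ := (S μ₂)⁻¹ * ((S μ₁)⁻¹ * (A * D)) with hBdef
  have hT₁ : ((S μ₁)⁻¹)ᴴ = (S μ₁)⁻¹ := hS₁.inv.isHermitian.eq
  have hT₂ : ((S μ₂)⁻¹)ᴴ = (S μ₂)⁻¹ := hS₂.inv.isHermitian.eq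
  have hBH : Bᴴ = Dᴴ * A * ((S μ₁)⁻¹ * (S μ₂)⁻¹) := by
    simp only [hBdef, conjTranspose_mul, hT₁, hT₂, hA.isHermitian.eq, Matrix.mul_assoc]
  have hdiff : Gam H β μ₁ hhat - Gam H β μ₂ hhat
      = ((β ^ 2 * (μ₂ - μ₁) : ℝ) : ℂ) • (Bᴴ * (S μ₁ + S μ₂) * B) := by
    show ((β : ℂ) ^ 2) • (Dᴴ * A * ((S μ₁)⁻¹ * (S μ₁)⁻¹) * A * D)
        - ((β : ℂ) ^ 2) • (Dᴴ * A * ((S μ₂)⁻¹ * (S μ₂)⁻¹) * A * D) = _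
    rw [← smul_sub, ← Matrix.sub_mul, ← Matrix.sub_mul, ← Matrix.mul_sub, hsub, hBH]
    simp only [Matrix.mul_smul, Matrix.smul_mul, smul_smul]
    rw [show ((β : ℂ) ^ 2 * ((μ₂ - μ₁ : ℝ) : ℂ)) = ((β ^ 2 * (μ₂ - μ₁) : ℝ) : ℂ) by
      push_cast; ring]
    rw [hBdef]
    simp only [Matrix.mul_assoc]
  have hscal : (0 : ℝ) ≤ β ^ 2 * (μ₂ - μ₁) := by nlinarith
  have hpsd : (Gam H β μ₁ hhat - Gam H β μ₂ hhat).PosSemidef := by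
    rw [hdiff]
    exact smul_posSemidef_of_nonneg hscal
      ((hS₁.posSemidef.add hS₂.posSemidef).conjTranspose_mul_mul_same B)
  refine ⟨hpsd, fun θ => ?_⟩
  have h := hpsd.dotProduct_mulVec_nonneg (star θ)
  rw [star_star, Matrix.sub_mulVec, dotProduct_sub] at h
  have := (Complex.le_def.mp h).1
  simp only [Complex.zero_re, Complex.sub_re] at this
  linarith
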